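/- Let y = (π(1), ..., π(m)) be a permutation vector. Then vectors h^0, h^1, ..., h^m ∈ [0,1]^m satisfy: (i) h^0_i = 0 for all i; (ii) h^j_i ≤ h^{j+1}_i for all j ∈ [m−1] and all i; (iii) Σ_i h^j_i = j for all j ∈ [m]; and (iv) Σ_{k=1}^{j} h^k_i ≥ j − y_i + 1 for all j, i ∈ [m]; if and only if for each j ∈ [m], h^j is the characteristic vector of H^j(π) = {i : π(i) ≤ j}. -/
import Mathlib

lemma card_filter_pi_lt (m : ℕ) (π : Equiv.Perm (Fin m)) (j : ℕ) (hj : j ≤ m) :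
    (Finset.univ.filter fun i : Fin m => (π i : ℕ) < j).card = j := by
  have h1 : (Finset.univ.filter fun i : Fin m => (π i : ℕ) < j).card
      = (Finset.univ.filter fun v : Fin m => (v : ℕ) < j).card := by
    apply Finset.card_bij (fun i _ => π i)
    · intro a ha
      simp only [Finset.mem_filter, Finset.mem_univ, true_and] at ha
      simpa using ha
    · intro a _ b _ hab; exact π.injective hab
    · intro b hb
      refine ⟨π.symm b, ?_, by simp⟩
      simp only [Finset.mem_filter, Finset.mem_univ, true_and] at hb ⊢
      simpa using hb
  rw [h1]; conv_rhs => rw [← Finset.card_range j]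
  apply Finset.card_bij' (fun (v : Fin m) _ => (v : ℕ))
    (fun n hn => (⟨n, lt_of_lt_of_le (Finset.mem_range.mp hn) hj⟩ : Fin m))
  case hi => intro a ha; simpa using (Finset.mem_filter.mp ha).2
  case hj => intro a ha; simpa using Finset.mem_range.mp ha
  case left_inv => intro a ha; simp
  case right_inv => intro a ha; simp

lemma sum_ind_icc (m : ℕ) (π : Equiv.Perm (Fin m)) (j : ℕ) (i : Fin m) :
    ∑ k ∈ Finset.Icc 1 j, (if (π i : ℕ) < k then (1:ℝ) else 0)
      = ((j - (π i : ℕ) : ℕ) : ℝ) := by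
  rw [Finset.sum_boole]
  have hf : (Finset.Icc 1 j).filter (fun k => (π i : ℕ) < k)
      = Finset.Icc ((π i : ℕ) + 1) j := by
    ext k; simp only [Finset.mem_filter, Finset.mem_Icc]; omega
  rw [hf]
  rw [Nat.card_Icc]
  congr 1
  omega

lemma sum_ind_univ (m : ℕ) (π : Equiv.Perm (Fin m)) (j : ℕ) (hj : j ≤ m) :
    ∑ i, (if (π i : ℕ) < j then (1:ℝ) else 0) = (j : ℝ) := by
  rw [Finset.sum_boole, card_filter_pi_lt m π j hj]

/-- Characterization of the transformation `Z`: for a permutation vector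
`y_i = π(i)` (here `(π i : ℕ) + 1 ∈ {1, …, m}`), vectors `h^0, …, h^m ∈ [0,1]^m`
satisfy (i) `h^0 = 0`, (ii) `h^j ≤ h^{j+1}` for `j ∈ [m−1]`, (iii) `∑_i h^j_i = j`
for `j ∈ [m]`, (iv) `∑_{k=1}^j h^k_i ≥ j − y_i + 1` for `j, i ∈ [m]`, if and only
if each `h^j` (for `j ∈ {0, …, m}`) is the characteristic vector of
`H^j(π) = {i : π(i) ≤ j}`. -/
theorem transformation_characterization (m : ℕ) (hm : 0 < m)
    (π : Equiv.Perm (Fin m)) (h : ℕ → Fin m → ℝ)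
    (hbound : ∀ j ≤ m, ∀ i, 0 ≤ h j i ∧ h j i ≤ 1) :
    ((∀ i, h 0 i = 0) ∧
     (∀ j, 1 ≤ j → j ≤ m - 1 → ∀ i, h j i ≤ h (j + 1) i) ∧
     (∀ j, 1 ≤ j → j ≤ m → ∑ i, h j i = (j : ℝ)) ∧
     (∀ j, 1 ≤ j → j ≤ m → ∀ i : Fin m,
        ∑ k ∈ Finset.Icc 1 j, h k i ≥ (j : ℝ) - ((π i : ℝ) + 1) + 1)) ↔
    (∀ j ≤ m, ∀ i : Fin m, h j i = if (π i : ℕ) < j then 1 else 0) := by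
  constructor
  · rintro ⟨h0, _, hsum, hineq⟩ j
    induction j using Nat.strong_induction_on with
    | _ j IH =>
      intro hjm i
      rcases Nat.eq_zero_or_pos j with rfl | hj1
      · simpa using h0 i
      · -- previous sums
        have hprev : ∀ i : Fin m, ∑ k ∈ Finset.Icc 1 (j-1), h k i
            = ((j - 1 - (π i : ℕ) : ℕ) : ℝ) := by
          intro i
          rw [Finset.sum_congr rfl (fun k hk => ?_), sum_ind_icc m π (j-1) i]
          have hk' := Finset.mem_Icc.mp hk
          exact IH k (by omega) (by omega) i
        have key1 : ∀ i : Fin m, (π i : ℕ) < j → h j i = 1 := by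
          intro i hpi
          have hge := hineq j hj1 hjm i
          have hsplit : ∑ k ∈ Finset.Icc 1 j, h k i
              = (∑ k ∈ Finset.Icc 1 (j-1), h k i) + h j i := by
            have he : Finset.Icc 1 j = insert j (Finset.Icc 1 (j-1)) := by
              ext k
              simp only [Finset.mem_Icc, Finset.mem_insert]
              omega
            rw [he, Finset.sum_insert (by simp only [Finset.mem_Icc]; omega)]
            ring
          have hle := (hbound j hjm i).2
          have hcast : ((j - 1 - (π i : ℕ) : ℕ) : ℝ) = (j : ℝ) - (π i : ℝ) - 1 := by
            have h1 : (π i : ℕ) ≤ j - 1 := by omega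
            rw [Nat.cast_sub h1, Nat.cast_sub (by omega : 1 ≤ j)]
            push_cast; ring
          have := hprev i
          linarith [hsplit ▸ hge, this]
        have hzero : ∀ i : Fin m, ¬ ((π i : ℕ) < j) → h j i = 0 := by
          have hsumj := hsum j hj1 hjm
          have hsplit := Finset.sum_filter_add_sum_filter_not Finset.univ
            (fun i : Fin m => (π i : ℕ) < j) (h j)
          have hP : ∑ i ∈ Finset.univ.filter (fun i : Fin m => (π i : ℕ) < j), h j i
              = (j : ℝ) := by
            rw [Finset.sum_congr rfl (fun i hi => key1 i
              (Finset.mem_filter.mp hi).2)]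
            rw [Finset.sum_const, card_filter_pi_lt m π j hjm]
            simp
          have hQ : ∑ i ∈ Finset.univ.filter (fun i : Fin m => ¬ (π i : ℕ) < j), h j i
              = 0 := by linarith
          intro i hi
          have := (Finset.sum_eq_zero_iff_of_nonneg
            (fun i _ => (hbound j hjm i).1)).mp hQ i
            (by simp only [Finset.mem_filter, Finset.mem_univ, true_and]; omega)
          exact this
        by_cases hpi : (π i : ℕ) < j
        · rw [key1 i hpi, if_pos hpi]
        · rw [hzero i hpi, if_neg hpi]
  · intro H
    refine ⟨?_, ?_, ?_, ?_⟩
    · intro i; simpa using H 0 (by omega) i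
    · intro j hj1 hjm1 i
      rw [H j (by omega), H (j+1) (by omega)]
      split_ifs with a b
      · exact le_refl _
      · omega
      · norm_num
      · exact le_refl _
    · intro j hj1 hjm
      rw [Finset.sum_congr rfl (fun i _ => H j hjm i), sum_ind_univ m π j hjm]
    · intro j hj1 hjm i
      rw [Finset.sum_congr rfl (fun k hk => H k (le_trans (Finset.mem_Icc.mp hk).2 hjm) i),
        sum_ind_icc m π j i]
      have h2 : ((j - (π i : ℕ) : ℕ) : ℝ) ≥ (j : ℝ) - (π i : ℝ) := by
        rcases le_total ((π i : ℕ)) j with hc | hc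
        · rw [Nat.cast_sub hc]
        · rw [Nat.sub_eq_zero_of_le hc]
          have : (j : ℝ) ≤ (π i : ℝ) := by exact_mod_cast hc
          simp; linarith
      linarith
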